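/- Let X, X̃ ∈ KMM(n,d,k) be two k-means matrices with ‖X − X̃‖_F ≤ ε. Write n_r = n_r(X) and δ_r = δ_r(X). Assume (a) X has exactly k distinct rows, and (b) there exist constants c_r > 0 with c_r + c_ℓ ≤ 1 for all r ≠ ℓ such that c_r^{-2}·ε²/(δ_r²·n_r) < 1 for every r ∈ [k]. Then X̃ has exactly k distinct rows and Mis_r(X; X̃) ≤ c_r^{-2}·ε²/(n_r·δ_r²) for every r ∈ [k]. -/

import Mathlib

open Matrix

noncomputable section

/-- Frobenius norm of a real matrix. -/
def frob {m n : Type*} [Fintype m] [Fintype n] (M : Matrix m n ℝ) : ℝ :=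
  Real.sqrt (∑ i, ∑ j, (M i j) ^ 2)

/-- Euclidean distance between two vectors. -/
def dist2 {d : Type*} [Fintype d] (u v : d → ℝ) : ℝ :=
  Real.sqrt (∑ j, (u j - v j) ^ 2)

/-- `X` has at most `k` distinct rows (is a k-means matrix). -/
def IsKMM {n d : ℕ} (k : ℕ) (X : Matrix (Fin n) (Fin d) ℝ) : Prop :=
  ∃ g : Fin n → Fin k, ∀ i i', g i = g i' → X i = X i'

/-- `g` is a labeling consistent with the rows of `X` (same label iff equal rows). -/
def IsLabeling {n d k : ℕ} (X : Matrix (Fin n) (Fin d) ℝ) (g : Fin n → Fin k) : Prop :=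
  ∀ i i', g i = g i' ↔ X i = X i'

/-- center separation `δ_r` of the center enumeration `q` at index `r`. -/
def centerSep {d : Type*} [Fintype d] {k : ℕ} (q : Fin k → d → ℝ) (r : Fin k) : ℝ :=
  sInf {t | ∃ ℓ, ℓ ≠ r ∧ t = dist2 (q ℓ) (q r)}

lemma dist2_eq_dist {d : Type*} [Fintype d] (u v : d → ℝ) :
    dist2 u v = dist ((EuclideanSpace.equiv d ℝ).symm u) ((EuclideanSpace.equiv d ℝ).symm v) := by
  rw [EuclideanSpace.dist_eq, dist2]
  congr 1
  refine Finset.sum_congr rfl fun j _ => ?_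
  rw [Real.dist_eq, sq_abs]
  rfl

lemma dist2_nonneg {d : Type*} [Fintype d] (u v : d → ℝ) : 0 ≤ dist2 u v := Real.sqrt_nonneg _

lemma dist2_comm {d : Type*} [Fintype d] (u v : d → ℝ) : dist2 u v = dist2 v u := by
  unfold dist2; congr 1; exact Finset.sum_congr rfl fun j _ => by ring

lemma dist2_triangle {d : Type*} [Fintype d] (u v w : d → ℝ) :
    dist2 u w ≤ dist2 u v + dist2 v w := by
  rw [dist2_eq_dist, dist2_eq_dist, dist2_eq_dist]
  exact dist_triangle _ _ _

lemma dist2_pos {d : Type*} [Fintype d] {u v : d → ℝ} (h : u ≠ v) : 0 < dist2 u v := by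
  rw [dist2_eq_dist, dist_pos]; simp [h]

lemma dist2_sq {d : Type*} [Fintype d] (u v : d → ℝ) :
    dist2 u v ^ 2 = ∑ j, (u j - v j) ^ 2 := Real.sq_sqrt (by positivity)

lemma ncard_eq_filter {n : ℕ} (P : Fin n → Prop) [DecidablePred P] :
    Set.ncard {i | P i} = (Finset.univ.filter P).card := by
  rw [Set.ncard_eq_toFinset_card', Set.toFinset_setOf]

/-- Proposition 3.1: misclassification rate between two close k-means matrices.
The clusters of `X` are enumerated by the injective center map `q`; the conclusion
exhibits a labeling `gt` of `X̃` (the optimal matching `Q*` of its labels to those of `X`)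
which is surjective (i.e. `X̃` has exactly `k` distinct rows) and misclassifies at most a
fraction `c_r⁻² ε² / (n_r δ_r²)` of each cluster `r` of `X`. -/
theorem stmt3 (n d k : ℕ)
    (X Xt : Matrix (Fin n) (Fin d) ℝ)
    (hXt : IsKMM k Xt)
    (q : Fin k → Fin d → ℝ) (hq_inj : Function.Injective q)
    (hq_cov : ∀ i, ∃ r, X i = q r)
    -- (a) `X` has exactly `k` distinct rows:
    (hq_surj : ∀ r, ∃ i, X i = q r)
    (ε : ℝ) (hε : frob (X - Xt) ≤ ε)
    (c : Fin k → ℝ) (hc_pos : ∀ r, 0 < c r)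
    (hc_sum : ∀ r ℓ, r ≠ ℓ → c r + c ℓ ≤ 1)
    -- (b)
    (hb : ∀ r, ((c r)⁻¹) ^ 2 * ε ^ 2 /
        ((centerSep q r) ^ 2 * (Set.ncard {i | X i = q r} : ℝ)) < 1) :
    ∃ gt : Fin n → Fin k, IsLabeling Xt gt ∧ Function.Surjective gt ∧
      ∀ r, (Set.ncard {i | X i = q r ∧ gt i ≠ r} : ℝ) / (Set.ncard {i | X i = q r} : ℝ) ≤
        ((c r)⁻¹) ^ 2 * ε ^ 2 /
          ((Set.ncard {i | X i = q r} : ℝ) * (centerSep q r) ^ 2) := by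
  classical
  rcases k with _ | k
  · -- k = 0 : Fin n is empty
    have hn : ∀ i : Fin n, False := fun i => (hq_cov i).choose.elim0
    refine ⟨fun i => (hn i).elim, fun i => (hn i).elim, fun r => r.elim0, fun r => r.elim0⟩
  rcases k with _ | k
  · -- k = 1
    obtain ⟨g, hg⟩ := hXt
    have hone : ∀ a b : Fin (0 + 1), a = b := by
      intro a b
      have h1 := a.isLt
      have h2 := b.isLt
      exact Fin.ext (by omega)
    refine ⟨fun _ => 0, ?_, ?_, ?_⟩
    · intro i i'
      exact ⟨fun _ => hg i i' (hone _ _), fun _ => rfl⟩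
    · intro r
      obtain ⟨i, _⟩ := hq_surj r
      exact ⟨i, hone _ _⟩
    · intro r
      have hempty : {i : Fin n | X i = q r ∧ (0 : Fin (0 + 1)) ≠ r} = ∅ := by
        ext i
        simp only [Set.mem_setOf_eq, Set.mem_empty_iff_false, iff_false]
        rintro ⟨-, hne⟩
        exact hne (hone _ _)
      rw [hempty]
      simp only [Set.ncard_empty, Nat.cast_zero, zero_div]
      positivity
  -- main case : k+2 clusters
  set δ : Fin (k + 1 + 1) → ℝ := centerSep q with hδdef
  set S : Fin (k + 1 + 1) → Set ℝ := fun r => {t | ∃ ℓ, ℓ ≠ r ∧ t = dist2 (q ℓ) (q r)} with hSdef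
  have hSfin : ∀ r, (S r).Finite := by
    intro r
    apply Set.Finite.subset (Set.finite_range (fun ℓ => dist2 (q ℓ) (q r)))
    rintro t ⟨ℓ, _, rfl⟩; exact ⟨ℓ, rfl⟩
  have hSne : ∀ r, (S r).Nonempty := by
    intro r
    obtain ⟨ℓ, hℓ⟩ := Fintype.exists_ne_of_one_lt_card (by rw [Fintype.card_fin]; omega) r
    exact ⟨dist2 (q ℓ) (q r), ℓ, hℓ, rfl⟩
  have hδ_mem : ∀ r, δ r ∈ S r := fun r => (hSne r).csInf_mem (hSfin r)
  have hδ_le : ∀ r ℓ, ℓ ≠ r → δ r ≤ dist2 (q ℓ) (q r) :=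
    fun r ℓ h => csInf_le (hSfin r).bddBelow ⟨ℓ, h, rfl⟩
  have hδ_pos : ∀ r, 0 < δ r := by
    intro r
    obtain ⟨ℓ, hne, heq⟩ := hδ_mem r
    rw [heq]
    exact dist2_pos (fun h => hne (hq_inj h))
  have hc0 : ∀ r : Fin (k + 1 + 1), c r ≠ 0 := fun r => (hc_pos r).ne'
  set Cr : Fin (k + 1 + 1) → Finset (Fin n) := fun r => Finset.univ.filter (fun i => X i = q r) with hCr
  set Br : Fin (k + 1 + 1) → Finset (Fin n) :=
    fun r => Finset.univ.filter (fun i => X i = q r ∧ c r * δ r ≤ dist2 (Xt i) (X i)) with hBr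
  have hnr : ∀ r, (Set.ncard {i | X i = q r} : ℝ) = ((Cr r).card : ℝ) := by
    intro r; rw [ncard_eq_filter]
  have hnr_pos : ∀ r, 0 < ((Cr r).card : ℝ) := by
    intro r
    obtain ⟨i, hi⟩ := hq_surj r
    have : i ∈ Cr r := by simp [hCr, hi]
    exact_mod_cast Finset.card_pos.mpr ⟨i, this⟩
  have hε0 : 0 ≤ ε := le_trans (Real.sqrt_nonneg _) hε
  -- sum bound for bad sets
  have hBsum : ∀ r, ((Br r).card : ℝ) * (c r * δ r) ^ 2 ≤ ε ^ 2 := by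
    intro r
    have h1 : ((Br r).card : ℝ) * (c r * δ r) ^ 2 ≤ ∑ i ∈ Br r, dist2 (Xt i) (X i) ^ 2 := by
      rw [← nsmul_eq_mul]
      refine Finset.card_nsmul_le_sum _ _ _ fun i hi => ?_
      have hi' := (Finset.mem_filter.mp hi).2.2
      exact pow_le_pow_left₀ (mul_nonneg (hc_pos r).le (hδ_pos r).le) hi' 2
    have h2 : ∑ i ∈ Br r, dist2 (Xt i) (X i) ^ 2 ≤ ∑ i, dist2 (Xt i) (X i) ^ 2 :=
      Finset.sum_le_sum_of_subset_of_nonneg (Finset.subset_univ _) (fun i _ _ => by positivity)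
    have h3 : ∑ i, dist2 (Xt i) (X i) ^ 2 = frob (X - Xt) ^ 2 := by
      rw [frob, Real.sq_sqrt (by positivity)]
      refine Finset.sum_congr rfl fun i _ => ?_
      rw [dist2_sq]
      refine Finset.sum_congr rfl fun j _ => ?_
      simp [Matrix.sub_apply]
      ring
    have h4 : frob (X - Xt) ^ 2 ≤ ε ^ 2 := pow_le_pow_left₀ (Real.sqrt_nonneg _) hε 2
    linarith
  -- from (b): ε² < (c δ)² n_r
  have hb' : ∀ r, ε ^ 2 < (c r * δ r) ^ 2 * ((Cr r).card : ℝ) := by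
    intro r
    have h := hb r
    rw [hnr r] at h
    have hden : 0 < (δ r) ^ 2 * ((Cr r).card : ℝ) := by
      have := hδ_pos r; have := hnr_pos r; positivity
    rw [div_lt_one hden] at h
    have h1 : (c r) ^ 2 * (((c r)⁻¹) ^ 2 * ε ^ 2) < (c r) ^ 2 * ((δ r) ^ 2 * ((Cr r).card : ℝ)) :=
      mul_lt_mul_of_pos_left h (pow_pos (hc_pos r) 2)
    have h2 : (c r) ^ 2 * (((c r)⁻¹) ^ 2 * ε ^ 2) = ((c r) * (c r)⁻¹) ^ 2 * ε ^ 2 := by ring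
    rw [mul_inv_cancel₀ (hc0 r), one_pow, one_mul] at h2
    calc ε ^ 2 = (c r) ^ 2 * (((c r)⁻¹) ^ 2 * ε ^ 2) := h2.symm
      _ < (c r) ^ 2 * ((δ r) ^ 2 * ((Cr r).card : ℝ)) := h1
      _ = (c r * δ r) ^ 2 * ((Cr r).card : ℝ) := by ring
  -- each cluster contains a good point
  have hgood : ∀ r, ∃ i, X i = q r ∧ dist2 (Xt i) (X i) < c r * δ r := by
    intro r
    by_contra h
    push_neg at h
    have hsub : Cr r ⊆ Br r := by
      intro i hi
      have hi' := (Finset.mem_filter.mp hi).2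
      exact Finset.mem_filter.mpr ⟨Finset.mem_univ _, hi', h i hi'⟩
    have hcard : ((Cr r).card : ℝ) ≤ ((Br r).card : ℝ) := by
      exact_mod_cast Finset.card_le_card hsub
    have hcd : 0 < (c r * δ r) ^ 2 := by
      have := hc_pos r; have := hδ_pos r; positivity
    nlinarith [hBsum r, hb' r]
  choose pt hpt1 hpt2 using hgood
  -- separation of good points in different clusters
  have hsep : ∀ r ℓ : Fin (k + 1 + 1), r ≠ ℓ → ∀ i i' : Fin n,
      X i = q r → dist2 (Xt i) (X i) < c r * δ r →
      X i' = q ℓ → dist2 (Xt i') (X i') < c ℓ * δ ℓ → Xt i ≠ Xt i' := by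
    intro r ℓ hne i i' hXi hdi hXi' hdi' heq
    set D := dist2 (q ℓ) (q r) with hD
    have htri : D ≤ dist2 (q ℓ) (Xt i) + dist2 (Xt i) (q r) := dist2_triangle _ _ _
    have e1 : dist2 (q ℓ) (Xt i) = dist2 (Xt i') (X i') := by rw [heq, dist2_comm, hXi']
    have e2 : dist2 (Xt i) (q r) = dist2 (Xt i) (X i) := by rw [hXi]
    have hlt : D < c ℓ * δ ℓ + c r * δ r := by rw [e1, e2] at htri; linarith
    have hD1 : δ r ≤ D := hδ_le r ℓ (fun h => hne h.symm)
    have hD2 : δ ℓ ≤ D := by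
      have := hδ_le ℓ r hne
      rw [dist2_comm] at this
      exact this
    have hcs : c r + c ℓ ≤ 1 := hc_sum r ℓ hne
    have hD0 : 0 ≤ D := dist2_nonneg _ _
    nlinarith [mul_le_mul_of_nonneg_left hD1 (hc_pos r).le,
      mul_le_mul_of_nonneg_left hD2 (hc_pos ℓ).le]
  have hv_inj : Function.Injective (fun r => Xt (pt r)) := by
    intro r ℓ h
    by_contra hne
    exact hsep r ℓ hne (pt r) (pt ℓ) (hpt1 r) (hpt2 r) (hpt1 ℓ) (hpt2 ℓ) h
  obtain ⟨g, hg⟩ := hXt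
  have hφ_inj : Function.Injective (fun r => g (pt r)) := by
    intro r ℓ h
    exact hv_inj (hg _ _ h)
  have hφ_bij := Finite.injective_iff_bijective.mp hφ_inj
  set e : Fin (k + 1 + 1) ≃ Fin (k + 1 + 1) := Equiv.ofBijective _ hφ_bij with he
  set gt : Fin n → Fin (k + 1 + 1) := fun i => e.symm (g i) with hgt
  have hgt_eq : ∀ i, Xt i = Xt (pt (gt i)) := by
    intro i
    have h1 : g (pt (gt i)) = g i := e.apply_symm_apply (g i)
    exact (hg _ _ h1).symm
  have hgt_good : ∀ (r : Fin (k + 1 + 1)) (i : Fin n),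
      X i = q r → dist2 (Xt i) (X i) < c r * δ r → gt i = r := by
    intro r i hXi hdi
    by_contra h
    exact hsep r (gt i) (fun h' => h h'.symm) i (pt (gt i)) hXi hdi
      (hpt1 _) (hpt2 _) (hgt_eq i)
  refine ⟨gt, ?_, ?_, ?_⟩
  · intro i i'
    constructor
    · intro h
      rw [hgt_eq i, hgt_eq i', h]
    · intro h
      have : Xt (pt (gt i)) = Xt (pt (gt i')) := by
        rw [← hgt_eq i, ← hgt_eq i', h]
      exact hv_inj this
  · intro r
    refine ⟨pt r, ?_⟩
    have h1 : Xt (pt (gt (pt r))) = Xt (pt r) := (hgt_eq (pt r)).symm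
    exact hv_inj h1
  · intro r
    have hsubM : Finset.univ.filter (fun i => X i = q r ∧ gt i ≠ r) ⊆ Br r := by
      intro i hi
      obtain ⟨_, hXi, hne⟩ := Finset.mem_filter.mp hi
      refine Finset.mem_filter.mpr ⟨Finset.mem_univ _, hXi, ?_⟩
      by_contra h
      push_neg at h
      exact hne (hgt_good r i hXi h)
    have hMle : ((Finset.univ.filter (fun i => X i = q r ∧ gt i ≠ r)).card : ℝ) ≤ ((Br r).card : ℝ) := by
      exact_mod_cast Finset.card_le_card hsubM
    rw [ncard_eq_filter, hnr r]
    set M := ((Finset.univ.filter (fun i => X i = q r ∧ gt i ≠ r)).card : ℝ)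
    set N := ((Cr r).card : ℝ)
    have hN := hnr_pos r
    have hδp := hδ_pos r
    rw [div_le_div_iff₀ hN (mul_pos hN (pow_pos hδp 2))]
    have hMcd : M * (c r * δ r) ^ 2 ≤ ε ^ 2 := by
      have := hBsum r
      nlinarith [sq_nonneg (c r * δ r)]
    have h3 : ((c r)⁻¹) ^ 2 * (M * (c r * δ r) ^ 2) = ((c r) * (c r)⁻¹) ^ 2 * (M * δ r ^ 2) := by
      ring
    rw [mul_inv_cancel₀ (hc0 r), one_pow, one_mul] at h3
    have key : M * δ r ^ 2 ≤ ((c r)⁻¹) ^ 2 * ε ^ 2 := by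
      rw [← h3]
      exact mul_le_mul_of_nonneg_left hMcd (sq_nonneg _)
    nlinarith [mul_le_mul_of_nonneg_right key hN.le]

end
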